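/- (Recurrence relation) For every integer $n \ge 0$ and every real number $x$, $B_{n+1}^{(L,Y)}(x) = x\sum_{k=0}^{n}\binom{n}{k} E\big[\langle Y\rangle_{k+1}\big] B_{n-k}^{(L,Y)}(x)$. -/

import Mathlib

open MeasureTheory ProbabilityTheory Finset

/-- The rising factorial `⟨x⟩_n = x (x+1) ⋯ (x+n-1)`, with `⟨x⟩_0 = 1`. -/
noncomputable def asc (x : ℝ) : ℕ → ℝ
  | 0 => 1
  | n + 1 => asc x n * (x + n)

lemma asc_succ (x : ℝ) (n : ℕ) : asc x (n + 1) = asc x n * (x + n) := rfl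

lemma asc_zero_eval (n : ℕ) : asc (0 : ℝ) (n + 1) = 0 := by
  induction n with
  | zero => simp [asc]
  | succ n ih => rw [asc_succ, ih, zero_mul]

lemma measurable_asc (n : ℕ) : Measurable (fun x : ℝ => asc x n) := by
  induction n with
  | zero => simpa [asc] using measurable_const
  | succ n ih => exact ih.mul (measurable_id.add_const _)

lemma abs_asc_le (x : ℝ) (n : ℕ) : |asc x n| ≤ (|x| + n) ^ n := by
  induction n with
  | zero => simp [asc]
  | succ n ih =>
      rw [asc_succ, abs_mul]
      have h1 : |x + (n : ℝ)| ≤ |x| + (n + 1 : ℕ) := by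
        push_cast
        calc |x + (n : ℝ)| ≤ |x| + n := by
              refine (abs_add_le _ _).trans ?_
              simp [abs_of_nonneg (n.cast_nonneg : (0:ℝ) ≤ n)]
          _ ≤ |x| + (n + 1) := by linarith
      have h2 : (|x| + n) ^ n ≤ (|x| + (n + 1 : ℕ)) ^ n := by
        apply pow_le_pow_left₀ (by positivity)
        push_cast; linarith
      calc |asc x n| * |x + n| ≤ (|x| + (n+1:ℕ)) ^ n * (|x| + (n+1:ℕ)) := by
            apply mul_le_mul (ih.trans h2) h1 (abs_nonneg _) (by positivity)
        _ = (|x| + (n+1:ℕ)) ^ (n + 1) := by ring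
  
lemma abs_asc_le_exp {s : ℝ} (hs : 0 < s) (x : ℝ) (n : ℕ) :
    |asc x n| ≤ (n.factorial * s⁻¹ ^ n * Real.exp (s * n)) * Real.exp (s * |x|) := by
  have h0 : (0:ℝ) ≤ |x| + n := by positivity
  have key : (s * (|x| + n)) ^ n / n.factorial ≤ Real.exp (s * (|x| + n)) := by
    calc (s * (|x| + n)) ^ n / n.factorial
        ≤ ∑ i ∈ range (n + 1), (s * (|x| + n)) ^ i / i.factorial := by
          exact Finset.single_le_sum (f := fun i => (s * (|x| + n)) ^ i / i.factorial)
            (fun i _ => by positivity) (Finset.self_mem_range_succ n)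
      _ ≤ Real.exp (s * (|x| + n)) := Real.sum_le_exp_of_nonneg (by positivity) _
  have h1 : (|x| + n) ^ n ≤ n.factorial * s⁻¹ ^ n * Real.exp (s * (|x| + n)) := by
    have hsn : (0:ℝ) < s ^ n := by positivity
    have := (div_le_iff₀ (by positivity : (0:ℝ) < (n.factorial:ℝ))).mp key
    rw [mul_pow] at this
    have h2 : (|x| + n) ^ n = s⁻¹ ^ n * (s ^ n * (|x| + n) ^ n) := by
      rw [← mul_assoc, ← mul_pow, inv_mul_cancel₀ hs.ne', one_pow, one_mul]
    rw [h2]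
    calc s⁻¹ ^ n * (s ^ n * (|x| + n) ^ n) ≤ s⁻¹ ^ n * (Real.exp (s * (|x| + n)) * n.factorial) :=
          by apply mul_le_mul_of_nonneg_left this (by positivity)
      _ = n.factorial * s⁻¹ ^ n * Real.exp (s * (|x| + n)) := by ring
  calc |asc x n| ≤ (|x| + n) ^ n := abs_asc_le x n
    _ ≤ n.factorial * s⁻¹ ^ n * Real.exp (s * (|x| + n)) := h1
    _ = (n.factorial * s⁻¹ ^ n * Real.exp (s * n)) * Real.exp (s * |x|) := by
        rw [mul_add s, Real.exp_add]; ring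

lemma pascal_sum (g : ℕ → ℝ) (n : ℕ) :
    ∑ j ∈ range (n + 2), ((n + 1).choose j : ℝ) * g j =
      ∑ j ∈ range (n + 1), (n.choose j : ℝ) * g (j + 1) +
        ∑ j ∈ range (n + 1), (n.choose j : ℝ) * g j := by
  rw [Finset.sum_range_succ' (fun j => ((n + 1).choose j : ℝ) * g j) (n+1)]
  have h1 : ∀ j, (((n+1).choose (j+1) : ℕ) : ℝ) = (n.choose j : ℝ) + (n.choose (j+1) : ℝ) := by
    intro j; rw [Nat.choose_succ_succ]; push_cast; ring
  have h2 : ∑ j ∈ range (n + 1), (((n+1).choose (j+1) : ℕ) : ℝ) * g (j + 1)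
      = ∑ j ∈ range (n + 1), (n.choose j : ℝ) * g (j + 1)
        + ∑ j ∈ range (n + 1), (n.choose (j+1) : ℝ) * g (j + 1) := by
    rw [← Finset.sum_add_distrib]
    refine Finset.sum_congr rfl fun j _ => ?_
    rw [h1]; ring
  rw [h2]
  have h3 : ∑ j ∈ range (n + 1), (n.choose (j+1) : ℝ) * g (j + 1) + ((n+1).choose 0 : ℝ) * g 0
      = ∑ j ∈ range (n + 1), (n.choose j : ℝ) * g j := by
    have hA := Finset.sum_range_succ' (fun j => (n.choose j : ℝ) * g j) (n+1)
    rw [Finset.sum_range_succ (fun j => (n.choose j : ℝ) * g j) (n+1)] at hA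
    simp only [Nat.choose_succ_self, Nat.cast_zero, zero_mul, add_zero,
      Nat.choose_zero_right, Nat.cast_one] at hA ⊢
    linarith [hA]
  linarith [h3]

lemma asc_add_eq (a b : ℝ) : ∀ n : ℕ,
    asc (a + b) n = ∑ k ∈ range (n + 1), (n.choose k : ℝ) * (asc a k * asc b (n - k))
  | 0 => by simp [asc]
  | (n+1) => by
      rw [asc_succ, asc_add_eq a b n, Finset.sum_mul]
      rw [pascal_sum (fun k => asc a k * asc b (n + 1 - k)) n]
      have : ∀ k ∈ range (n+1), (n.choose k : ℝ) * (asc a k * asc b (n - k)) * (a + b + n)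
          = (n.choose k : ℝ) * (asc a (k+1) * asc b (n - k))
            + (n.choose k : ℝ) * (asc a k * asc b (n + 1 - k)) := by
        intro k hk
        have hk' : k ≤ n := Nat.lt_succ_iff.mp (Finset.mem_range.mp hk)
        have e1 : asc a (k+1) = asc a k * (a + k) := rfl
        have e2 : n + 1 - k = (n - k) + 1 := by omega
        have e3 : asc b (n + 1 - k) = asc b (n - k) * (b + (n - k : ℕ)) := by
          rw [e2, asc_succ]
        have e4 : ((n - k : ℕ) : ℝ) = (n : ℝ) - k := by
          rw [Nat.cast_sub hk']
        rw [e1, e3, e4]; ring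
      rw [Finset.sum_congr rfl this, Finset.sum_add_distrib]
      congr 1
      · refine Finset.sum_congr rfl fun k hk => ?_
        have hk' : k ≤ n := Nat.lt_succ_iff.mp (Finset.mem_range.mp hk)
        have : n + 1 - (k + 1) = n - k := by omega
        rw [this]

lemma asc_sum_succ {ι : Type*} [DecidableEq ι] (s : Finset ι) (a : ι → ℝ) :
    ∀ n : ℕ, asc (∑ i ∈ s, a i) (n + 1) =
      ∑ i ∈ s, ∑ j ∈ range (n + 1), (n.choose j : ℝ) *
        (asc (a i) (j + 1) * asc (∑ i' ∈ s.erase i, a i') (n - j))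
  | 0 => by
      have : ∀ i ∈ s, ∑ j ∈ range 1, ((0:ℕ).choose j : ℝ) *
          (asc (a i) (j + 1) * asc (∑ i' ∈ s.erase i, a i') (0 - j)) = a i := by
        intro i hi
        simp [asc]
      rw [Finset.sum_congr rfl this]
      simp [asc]
  | (n+1) => by
      rw [asc_succ, asc_sum_succ s a n, Finset.sum_mul]
      refine Finset.sum_congr rfl fun i hi => ?_
      rw [Finset.sum_mul,
        pascal_sum (fun j => asc (a i) (j + 1) * asc (∑ i' ∈ s.erase i, a i') (n + 1 - j)) n]
      have hT : a i + ∑ i' ∈ s.erase i, a i' = ∑ i' ∈ s, a i' := Finset.add_sum_erase s a hi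
      have key : ∀ j ∈ range (n + 1),
          (n.choose j : ℝ) * (asc (a i) (j + 1) * asc (∑ i' ∈ s.erase i, a i') (n - j))
              * (∑ i' ∈ s, a i' + ((n:ℝ) + 1))
          = (n.choose j : ℝ) * (asc (a i) (j + 2) * asc (∑ i' ∈ s.erase i, a i') (n - j))
            + (n.choose j : ℝ) *
              (asc (a i) (j + 1) * asc (∑ i' ∈ s.erase i, a i') (n + 1 - j)) := by
        intro j hj
        have hj' : j ≤ n := Nat.lt_succ_iff.mp (Finset.mem_range.mp hj)
        have e1 : asc (a i) (j + 2) = asc (a i) (j + 1) * (a i + ((j:ℝ) + 1)) := by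
          rw [asc_succ]; push_cast; ring
        have e2 : n + 1 - j = (n - j) + 1 := by omega
        have e3 : asc (∑ i' ∈ s.erase i, a i') (n + 1 - j)
            = asc (∑ i' ∈ s.erase i, a i') (n - j) * (∑ i' ∈ s.erase i, a i' + ((n:ℝ) - j)) := by
          rw [e2, asc_succ, Nat.cast_sub hj']
        rw [e1, e3, ← hT]; ring
      have : (∑ i' ∈ s, a i' + ((n + 1 : ℕ) : ℝ)) = (∑ i' ∈ s, a i' + ((n:ℝ) + 1)) := by
        push_cast; ring
      rw [this, Finset.sum_congr rfl key, Finset.sum_add_distrib]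
      congr 1
      refine Finset.sum_congr rfl fun j hj => ?_
      have : n + 1 - (j + 1) = n - j := by omega
      rw [this]

section Prob

variable {Ω : Type*} [MeasurableSpace Ω] {μ : Measure Ω} [IsProbabilityMeasure μ]
  {Y : Ω → ℝ} {Ys : ℕ → Ω → ℝ} {s : ℝ}

lemma int_exp_abs (hY : Measurable Y) {r : ℝ} (hs : 0 < s) (hsr : s < r)
    (hmgf : ∀ t : ℝ, |t| < r → Integrable (fun ω => Real.exp (t * Y ω)) μ) :
    Integrable (fun ω => Real.exp (s * |Y ω|)) μ := by
  have h1 := hmgf s (by rwa [abs_of_pos hs])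
  have h2 := hmgf (-s) (by rwa [abs_neg, abs_of_pos hs])
  refine Integrable.mono' (h1.add h2) ((hY.abs.const_mul s).exp).aestronglyMeasurable ?_
  refine Filter.Eventually.of_forall fun ω => ?_
  rw [Real.norm_eq_abs, abs_of_nonneg (Real.exp_pos _).le]
  simp only [Pi.add_apply]
  rcases le_or_gt 0 (Y ω) with h | h
  · rw [abs_of_nonneg h]
    have := (Real.exp_pos (-s * Y ω)).le
    linarith
  · rw [abs_of_neg h, show s * -Y ω = -s * Y ω from by ring]
    have := (Real.exp_pos (s * Y ω)).le
    linarith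

lemma int_exp_abs_Ys (hid : ∀ j, IdentDistrib (Ys j) Y μ μ)
    (hsY : Integrable (fun ω => Real.exp (s * |Y ω|)) μ) (j : ℕ) :
    Integrable (fun ω => Real.exp (s * |Ys j ω|)) μ :=
  ((hid j).comp ((measurable_abs.const_mul s).exp)).integrable_iff.mpr hsY

lemma int_prod_exp (hYs : ∀ j, Measurable (Ys j))
    (hindep : iIndepFun Ys μ)
    (hid : ∀ j, IdentDistrib (Ys j) Y μ μ) (hs : 0 < s)
    (hsY : Integrable (fun ω => Real.exp (s * |Y ω|)) μ) (t : Finset ℕ) :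
    Integrable (fun ω => ∏ j ∈ t, Real.exp (s * |Ys j ω|)) μ := by
  classical
  induction t using Finset.induction_on with
  | empty => simpa using (integrable_const (1:ℝ))
  | @insert c t hc ih =>
      have hgind : iIndepFun
          (fun j => (fun y => Real.exp (s * |y|)) ∘ Ys j) μ :=
        hindep.comp (fun _ y => Real.exp (s * |y|)) (fun _ => (measurable_abs.const_mul s).exp)
      have hind2 : IndepFun (∏ j ∈ t, (fun y => Real.exp (s * |y|)) ∘ Ys j)
          ((fun y => Real.exp (s * |y|)) ∘ Ys c) μ :=
        hgind.indepFun_finsetProd_of_notMem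
          (fun j => (measurable_abs.const_mul s).exp.comp (hYs j)) hc
      have key : Integrable ((∏ j ∈ t, (fun y => Real.exp (s * |y|)) ∘ Ys j) *
          ((fun y => Real.exp (s * |y|)) ∘ Ys c)) μ := by
        refine hind2.integrable_mul ?_ (int_exp_abs_Ys hid hsY c)
        have : (∏ j ∈ t, (fun y => Real.exp (s * |y|)) ∘ Ys j)
            = fun ω => ∏ j ∈ t, Real.exp (s * |Ys j ω|) := by
          funext ω; simp [Finset.prod_apply]
        rw [this]; exact ih
      have : (fun ω => ∏ j ∈ insert c t, Real.exp (s * |Ys j ω|))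
          = (∏ j ∈ t, (fun y => Real.exp (s * |y|)) ∘ Ys j) *
            ((fun y => Real.exp (s * |y|)) ∘ Ys c) := by
        funext ω
        simp only [Pi.mul_apply, Finset.prod_apply, Function.comp_apply]
        rw [Finset.prod_insert hc, mul_comm]
      rw [this]; exact key

lemma int_asc_sum (hYs : ∀ j, Measurable (Ys j))
    (hindep : iIndepFun Ys μ)
    (hid : ∀ j, IdentDistrib (Ys j) Y μ μ) (hs : 0 < s)
    (hsY : Integrable (fun ω => Real.exp (s * |Y ω|)) μ) (t : Finset ℕ) (n : ℕ) :
    Integrable (fun ω => asc (∑ j ∈ t, Ys j ω) n) μ := by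
  refine Integrable.mono'
    ((int_prod_exp hYs hindep hid hs hsY t).const_mul
      ((n.factorial : ℝ) * s⁻¹ ^ n * Real.exp (s * n)))
    ((measurable_asc n).comp (Finset.measurable_sum t fun j _ => hYs j)).aestronglyMeasurable ?_
  refine Filter.Eventually.of_forall fun ω => ?_
  rw [Real.norm_eq_abs]
  have hC : (0:ℝ) ≤ (n.factorial : ℝ) * s⁻¹ ^ n * Real.exp (s * n) := by positivity
  calc |asc (∑ j ∈ t, Ys j ω) n|
      ≤ ((n.factorial : ℝ) * s⁻¹ ^ n * Real.exp (s * n)) * Real.exp (s * |∑ j ∈ t, Ys j ω|) :=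
        abs_asc_le_exp hs _ n
    _ ≤ ((n.factorial : ℝ) * s⁻¹ ^ n * Real.exp (s * n)) *
          ∏ j ∈ t, Real.exp (s * |Ys j ω|) := by
        rw [← Real.exp_sum]
        refine mul_le_mul_of_nonneg_left (Real.exp_le_exp.mpr ?_) hC
        rw [← Finset.mul_sum]
        exact mul_le_mul_of_nonneg_left (Finset.abs_sum_le_sum_abs _ _) hs.le

lemma int_asc_mul (hYs : ∀ j, Measurable (Ys j))
    (hindep : iIndepFun Ys μ)
    (hid : ∀ j, IdentDistrib (Ys j) Y μ μ) (hs : 0 < s)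
    (hsY : Integrable (fun ω => Real.exp (s * |Y ω|)) μ)
    {c : ℕ} {t : Finset ℕ} (hc : c ∉ t) (k m : ℕ) :
    Integrable (fun ω => asc (Ys c ω) k * asc (∑ j ∈ t, Ys j ω) m) μ ∧
    ∫ ω, asc (Ys c ω) k * asc (∑ j ∈ t, Ys j ω) m ∂μ
      = (∫ ω, asc (Y ω) k ∂μ) * ∫ ω, asc (∑ j ∈ t, Ys j ω) m ∂μ := by
  have hsum : (∑ j ∈ t, Ys j) = fun ω => ∑ j ∈ t, Ys j ω := by
    funext ω; simp [Finset.sum_apply]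
  have hind : IndepFun (Ys c) (fun ω => ∑ j ∈ t, Ys j ω) μ := by
    have := (hindep.indepFun_finsetSum_of_notMem hYs hc).symm
    rwa [hsum] at this
  have hind2 : IndepFun (fun ω => asc (Ys c ω) k) (fun ω => asc (∑ j ∈ t, Ys j ω) m) μ :=
    hind.comp (measurable_asc k) (measurable_asc m)
  have h1 : Integrable (fun ω => asc (Ys c ω) k) μ := by
    have := int_asc_sum hYs hindep hid hs hsY {c} k
    simpa using this
  have h2 := int_asc_sum hYs hindep hid hs hsY t m
  have hYc : ∫ ω, asc (Ys c ω) k ∂μ = ∫ ω, asc (Y ω) k ∂μ :=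
    ((hid c).comp (measurable_asc k)).integral_eq
  exact ⟨hind2.integrable_mul h1 h2, by
    rw [← hYc]; exact hind2.integral_fun_mul_eq_mul_integral h1.aestronglyMeasurable h2.aestronglyMeasurable⟩


lemma step_insert (hYs : ∀ j, Measurable (Ys j))
    (hindep : iIndepFun Ys μ)
    (hid : ∀ j, IdentDistrib (Ys j) Y μ μ) (hs : 0 < s)
    (hsY : Integrable (fun ω => Real.exp (s * |Y ω|)) μ)
    {c : ℕ} {t : Finset ℕ} (hc : c ∉ t) (n : ℕ) :
    ∫ ω, asc (∑ j ∈ insert c t, Ys j ω) n ∂μ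
      = ∑ k ∈ range (n + 1), (n.choose k : ℝ) *
          ((∫ ω, asc (Y ω) k ∂μ) * ∫ ω, asc (∑ j ∈ t, Ys j ω) (n - k) ∂μ) := by
  have h2 : ∀ ω, asc (∑ j ∈ insert c t, Ys j ω) n
      = ∑ k ∈ range (n + 1), (n.choose k : ℝ) *
          (asc (Ys c ω) k * asc (∑ j ∈ t, Ys j ω) (n - k)) := by
    intro ω
    rw [Finset.sum_insert hc, asc_add_eq]
  simp only [h2]
  rw [integral_finset_sum _
    (fun k _ => ((int_asc_mul hYs hindep hid hs hsY hc k (n - k)).1).const_mul _)]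
  refine Finset.sum_congr rfl fun k hk => ?_
  rw [MeasureTheory.integral_const_mul _, (int_asc_mul hYs hindep hid hs hsY hc k (n - k)).2]

lemma sum_law (hYs : ∀ j, Measurable (Ys j))
    (hindep : iIndepFun Ys μ)
    (hid : ∀ j, IdentDistrib (Ys j) Y μ μ) (hs : 0 < s)
    (hsY : Integrable (fun ω => Real.exp (s * |Y ω|)) μ) (t : Finset ℕ) :
    ∀ n : ℕ, ∫ ω, asc (∑ j ∈ t, Ys j ω) n ∂μ
      = ∫ ω, asc (∑ j ∈ range t.card, Ys j ω) n ∂μ := by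
  induction t using Finset.induction_on with
  | empty => simp
  | @insert c t hc ih =>
      intro n
      rw [step_insert hYs hindep hid hs hsY hc n]
      have hc2 : t.card ∉ range t.card := by simp
      have hR : ∫ ω, asc (∑ j ∈ range ((insert c t).card), Ys j ω) n ∂μ
          = ∑ k ∈ range (n + 1), (n.choose k : ℝ) *
              ((∫ ω, asc (Y ω) k ∂μ) * ∫ ω, asc (∑ j ∈ range t.card, Ys j ω) (n - k) ∂μ) := by
        rw [Finset.card_insert_of_notMem hc, Finset.range_add_one]
        exact step_insert hYs hindep hid hs hsY hc2 n
      rw [hR]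
      exact Finset.sum_congr rfl fun k _ => by rw [ih (n - k)]

noncomputable def ascMoment {Ω : Type*} [MeasurableSpace Ω] (μ : Measure Ω)
    (Ys : ℕ → Ω → ℝ) (l n : ℕ) : ℝ :=
  ∫ ω, asc (∑ j ∈ Finset.range l, Ys j ω) n ∂μ

noncomputable def Dnum {Ω : Type*} [MeasurableSpace Ω] (μ : Measure Ω)
    (Ys : ℕ → Ω → ℝ) (n k : ℕ) : ℝ :=
  ∑ l ∈ Finset.range (k + 1), (k.choose l : ℝ) * (-1) ^ (k - l) * ascMoment μ Ys l n

lemma ascMoment_zero_right (l : ℕ) : ascMoment μ Ys l 0 = 1 := by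
  rw [show ascMoment μ Ys l 0 = ∫ ω, asc (∑ j ∈ Finset.range l, Ys j ω) 0 ∂μ from rfl]
  simp [asc]

lemma ascMoment_zero_left (n : ℕ) : ascMoment μ Ys 0 (n + 1) = 0 := by
  rw [show ascMoment μ Ys 0 (n + 1) = ∫ ω, asc (∑ j ∈ Finset.range 0, Ys j ω) (n + 1) ∂μ from rfl]
  simp [asc_zero_eval]

lemma moment_succ (hYs : ∀ j, Measurable (Ys j))
    (hindep : iIndepFun Ys μ)
    (hid : ∀ j, IdentDistrib (Ys j) Y μ μ) (hs : 0 < s)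
    (hsY : Integrable (fun ω => Real.exp (s * |Y ω|)) μ) (l n : ℕ) :
    ascMoment μ Ys l (n + 1) = l * ∑ j ∈ range (n + 1),
      (n.choose j : ℝ) * (∫ ω, asc (Y ω) (j + 1) ∂μ) * ascMoment μ Ys (l - 1) (n - j) := by
  have h2 : ∀ ω : Ω, asc (∑ j ∈ range l, Ys j ω) (n + 1)
      = ∑ i ∈ range l, ∑ j ∈ range (n + 1), (n.choose j : ℝ) *
          (asc (Ys i ω) (j + 1) * asc (∑ i' ∈ (range l).erase i, Ys i' ω) (n - j)) :=
    fun ω => asc_sum_succ (range l) (fun j => Ys j ω) n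
  rw [show ascMoment μ Ys l (n + 1) = ∫ ω, asc (∑ j ∈ range l, Ys j ω) (n + 1) ∂μ from rfl]
  simp only [h2]
  rw [integral_finset_sum _ (fun i _ => integrable_finset_sum _ (fun j _ =>
    ((int_asc_mul hYs hindep hid hs hsY (Finset.notMem_erase i (range l))
      (j + 1) (n - j)).1).const_mul _))]
  have key : ∀ i ∈ range l,
      (∫ ω, ∑ j ∈ range (n + 1), (n.choose j : ℝ) *
        (asc (Ys i ω) (j + 1) * asc (∑ i' ∈ (range l).erase i, Ys i' ω) (n - j)) ∂μ)
      = ∑ j ∈ range (n + 1), (n.choose j : ℝ) * (∫ ω, asc (Y ω) (j + 1) ∂μ) *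
          ascMoment μ Ys (l - 1) (n - j) := by
    intro i hi
    rw [integral_finset_sum _ (fun j _ =>
      ((int_asc_mul hYs hindep hid hs hsY (Finset.notMem_erase i (range l))
        (j + 1) (n - j)).1).const_mul _)]
    refine Finset.sum_congr rfl fun j _ => ?_
    rw [MeasureTheory.integral_const_mul _,
      (int_asc_mul hYs hindep hid hs hsY (Finset.notMem_erase i (range l)) (j + 1) (n - j)).2,
      sum_law hYs hindep hid hs hsY ((range l).erase i) (n - j),
      Finset.card_erase_of_mem hi, Finset.card_range]
    rw [show ascMoment μ Ys (l - 1) (n - j)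
      = ∫ ω, asc (∑ j' ∈ range (l - 1), Ys j' ω) (n - j) ∂μ from rfl]
    ring
  rw [Finset.sum_congr rfl key, Finset.sum_const, Finset.card_range, nsmul_eq_mul]

lemma Dnum_succ (hYs : ∀ j, Measurable (Ys j))
    (hindep : iIndepFun Ys μ)
    (hid : ∀ j, IdentDistrib (Ys j) Y μ μ) (hs : 0 < s)
    (hsY : Integrable (fun ω => Real.exp (s * |Y ω|)) μ) (n m : ℕ) :
    Dnum μ Ys (n + 1) (m + 1) = ((m : ℝ) + 1) * ∑ j ∈ range (n + 1),
      (n.choose j : ℝ) * (∫ ω, asc (Y ω) (j + 1) ∂μ) * Dnum μ Ys (n - j) m := by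
  rw [show Dnum μ Ys (n + 1) (m + 1) = ∑ l ∈ range (m + 2),
    ((m + 1).choose l : ℝ) * (-1) ^ (m + 1 - l) * ascMoment μ Ys l (n + 1) from rfl]
  rw [Finset.sum_range_succ'
    (fun l => ((m + 1).choose l : ℝ) * (-1) ^ (m + 1 - l) * ascMoment μ Ys l (n + 1)) (m + 1)]
  rw [ascMoment_zero_left n, mul_zero, add_zero]
  have key : ∀ l ∈ range (m + 1),
      ((m + 1).choose (l + 1) : ℝ) * (-1) ^ (m + 1 - (l + 1)) * ascMoment μ Ys (l + 1) (n + 1)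
      = ((m : ℝ) + 1) * ((m.choose l : ℝ) * (-1) ^ (m - l) *
          ∑ j ∈ range (n + 1), (n.choose j : ℝ) * (∫ ω, asc (Y ω) (j + 1) ∂μ) *
            ascMoment μ Ys l (n - j)) := by
    intro l _
    rw [moment_succ hYs hindep hid hs hsY (l + 1) n]
    simp only [Nat.add_sub_cancel]
    have hch : ((m + 1).choose (l + 1) : ℝ) * ((l : ℝ) + 1) = ((m : ℝ) + 1) * (m.choose l : ℝ) := by
      have h := congrArg (Nat.cast : ℕ → ℝ) (Nat.add_one_mul_choose_eq m l)
      push_cast at h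
      linarith
    have hpow : m + 1 - (l + 1) = m - l := by omega
    rw [hpow]
    push_cast
    set S := ∑ j ∈ range (n + 1), (n.choose j : ℝ) * (∫ ω, asc (Y ω) (j + 1) ∂μ) *
      ascMoment μ Ys l (n - j) with hS
    linear_combination ((-1 : ℝ)) ^ (m - l) * S * hch
  rw [Finset.sum_congr rfl key, ← Finset.mul_sum]
  congr 1
  calc ∑ l ∈ range (m + 1), (m.choose l : ℝ) * (-1) ^ (m - l) *
        ∑ j ∈ range (n + 1), (n.choose j : ℝ) * (∫ ω, asc (Y ω) (j + 1) ∂μ) *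
          ascMoment μ Ys l (n - j)
      = ∑ l ∈ range (m + 1), ∑ j ∈ range (n + 1), (n.choose j : ℝ) *
          (∫ ω, asc (Y ω) (j + 1) ∂μ) *
          ((m.choose l : ℝ) * (-1) ^ (m - l) * ascMoment μ Ys l (n - j)) := by
        refine Finset.sum_congr rfl fun l _ => ?_
        rw [Finset.mul_sum]
        exact Finset.sum_congr rfl fun j _ => by ring
    _ = ∑ j ∈ range (n + 1), ∑ l ∈ range (m + 1), (n.choose j : ℝ) *
          (∫ ω, asc (Y ω) (j + 1) ∂μ) *
          ((m.choose l : ℝ) * (-1) ^ (m - l) * ascMoment μ Ys l (n - j)) := Finset.sum_comm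
    _ = ∑ j ∈ range (n + 1), (n.choose j : ℝ) * (∫ ω, asc (Y ω) (j + 1) ∂μ) *
          Dnum μ Ys (n - j) m := by
        refine Finset.sum_congr rfl fun j _ => ?_
        rw [show Dnum μ Ys (n - j) m = ∑ l ∈ range (m + 1),
          (m.choose l : ℝ) * (-1) ^ (m - l) * ascMoment μ Ys l (n - j) from rfl,
          Finset.mul_sum]

lemma alt_sum_choose {k : ℕ} (hk : k ≠ 0) :
    ∑ l ∈ range (k + 1), (k.choose l : ℝ) * (-1) ^ (k - l) = 0 := by
  have h := Int.alternating_sum_range_choose (n := k)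
  rw [if_neg hk] at h
  have h2 : ∑ l ∈ range (k + 1), (k.choose l : ℝ) * (-1) ^ (k - l)
      = ∑ l ∈ range (k + 1), ((-1 : ℝ)) ^ l * (k.choose l : ℝ) := by
    rw [← Finset.sum_range_reflect (fun l => ((-1 : ℝ)) ^ l * (k.choose l : ℝ)) (k + 1)]
    refine Finset.sum_congr rfl fun l hl => ?_
    have hl' : l ≤ k := Nat.lt_succ_iff.mp (Finset.mem_range.mp hl)
    have e1 : k + 1 - 1 - l = k - l := by omega
    rw [e1, Nat.choose_symm hl']
    ring
  rw [h2]
  calc ∑ l ∈ range (k + 1), ((-1 : ℝ)) ^ l * (k.choose l : ℝ)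
      = ((∑ i ∈ range (k + 1), (-1 : ℤ) ^ i * (k.choose i : ℤ) : ℤ) : ℝ) := by
        push_cast
        rfl
    _ = 0 := by rw [h]; norm_num

lemma Dnum_eq_zero (hYs : ∀ j, Measurable (Ys j))
    (hindep : iIndepFun Ys μ)
    (hid : ∀ j, IdentDistrib (Ys j) Y μ μ) (hs : 0 < s)
    (hsY : Integrable (fun ω => Real.exp (s * |Y ω|)) μ) :
    ∀ n k : ℕ, n < k → Dnum μ Ys n k = 0 := by
  intro n
  induction n using Nat.strong_induction_on with
  | _ n ih =>
    intro k hk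
    obtain ⟨m, rfl⟩ : ∃ m, k = m + 1 := ⟨k - 1, by omega⟩
    cases n with
    | zero =>
        rw [show Dnum μ Ys 0 (m + 1) = ∑ l ∈ range (m + 2),
          ((m + 1).choose l : ℝ) * (-1) ^ (m + 1 - l) * ascMoment μ Ys l 0 from rfl]
        have h1 : ∀ l ∈ range (m + 2),
            ((m + 1).choose l : ℝ) * (-1) ^ (m + 1 - l) * ascMoment μ Ys l 0
            = ((m + 1).choose l : ℝ) * (-1) ^ (m + 1 - l) := by
          intro l _
          rw [ascMoment_zero_right, mul_one]
        rw [Finset.sum_congr rfl h1]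
        exact alt_sum_choose (Nat.succ_ne_zero m)
    | succ N =>
        rw [Dnum_succ hYs hindep hid hs hsY N m]
        have h1 : ∀ j ∈ range (N + 1),
            (N.choose j : ℝ) * (∫ ω, asc (Y ω) (j + 1) ∂μ) * Dnum μ Ys (N - j) m = 0 := by
          intro j _
          rw [ih (N - j) (by omega) m (by omega), mul_zero]
        rw [Finset.sum_congr rfl h1]
        simp

end Prob

/-- The probabilistic Lah numbers associated with the random variable `Y`, defined from
the iid copies `Ys` of `Y` via `L_Y(n,k) = (1/k!) ∑_{l=0}^k C(k,l) (-1)^{k-l} E[⟨S_l⟩_n]`,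
where `S_l = Y_1 + ⋯ + Y_l`. -/
noncomputable def probLah {Ω : Type*} [MeasurableSpace Ω] (μ : Measure Ω)
    (Ys : ℕ → Ω → ℝ) (n k : ℕ) : ℝ :=
  (k.factorial : ℝ)⁻¹ * ∑ l ∈ Finset.range (k + 1),
    (k.choose l : ℝ) * (-1) ^ (k - l) * ∫ ω, asc (∑ j ∈ Finset.range l, Ys j ω) n ∂μ

/-- The probabilistic Lah-Bell polynomials `B_n^{(L,Y)}(x) = ∑_{k=0}^n L_Y(n,k) x^k`. -/
noncomputable def probLahBell {Ω : Type*} [MeasurableSpace Ω] (μ : Measure Ω)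
    (Ys : ℕ → Ω → ℝ) (n : ℕ) (x : ℝ) : ℝ :=
  ∑ k ∈ Finset.range (n + 1), probLah μ Ys n k * x ^ k

section Prob2

variable {Ω : Type*} [MeasurableSpace Ω] {μ : Measure Ω} [IsProbabilityMeasure μ]
  {Y : Ω → ℝ} {Ys : ℕ → Ω → ℝ} {s : ℝ}

lemma probLah_eq_Dnum (n k : ℕ) : probLah μ Ys n k = (k.factorial : ℝ)⁻¹ * Dnum μ Ys n k := rfl

lemma probLah_zero_of_lt (hYs : ∀ j, Measurable (Ys j))
    (hindep : iIndepFun Ys μ)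
    (hid : ∀ j, IdentDistrib (Ys j) Y μ μ) (hs : 0 < s)
    (hsY : Integrable (fun ω => Real.exp (s * |Y ω|)) μ)
    {n k : ℕ} (h : n < k) : probLah μ Ys n k = 0 := by
  rw [probLah_eq_Dnum, Dnum_eq_zero hYs hindep hid hs hsY n k h, mul_zero]

lemma probLah_succ_succ (hYs : ∀ j, Measurable (Ys j))
    (hindep : iIndepFun Ys μ)
    (hid : ∀ j, IdentDistrib (Ys j) Y μ μ) (hs : 0 < s)
    (hsY : Integrable (fun ω => Real.exp (s * |Y ω|)) μ) (n m : ℕ) :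
    probLah μ Ys (n + 1) (m + 1) = ∑ j ∈ range (n + 1),
      (n.choose j : ℝ) * (∫ ω, asc (Y ω) (j + 1) ∂μ) * probLah μ Ys (n - j) m := by
  rw [probLah_eq_Dnum, Dnum_succ hYs hindep hid hs hsY n m]
  have hfac : ((m + 1).factorial : ℝ)⁻¹ * ((m : ℝ) + 1) = ((m.factorial : ℝ))⁻¹ := by
    have h2 : (m.factorial : ℝ) ≠ 0 := Nat.cast_ne_zero.mpr m.factorial_ne_zero
    have h3 : ((m : ℝ) + 1) ≠ 0 := by positivity
    rw [Nat.factorial_succ]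
    push_cast
    field_simp
  rw [← mul_assoc, hfac, Finset.mul_sum]
  refine Finset.sum_congr rfl fun j _ => ?_
  rw [probLah_eq_Dnum]
  ring

lemma probLah_succ_zero (n : ℕ) : probLah μ Ys (n + 1) 0 = 0 := by
  simp [probLah, asc_zero_eval]

theorem statement_6' (hY : Measurable Y)
    (hYs : ∀ j, Measurable (Ys j))
    (hid : ∀ j, IdentDistrib (Ys j) Y μ μ)
    (hindep : iIndepFun Ys μ)
    (r : ℝ) (hr : 0 < r)
    (hmgf : ∀ t : ℝ, |t| < r → Integrable (fun ω => Real.exp (t * Y ω)) μ)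
    (n : ℕ) (x : ℝ) :
    probLahBell μ Ys (n + 1) x = x * ∑ k ∈ Finset.range (n + 1),
      (n.choose k : ℝ) * (∫ ω, asc (Y ω) (k + 1) ∂μ) * probLahBell μ Ys (n - k) x := by
  have hs : (0 : ℝ) < r / 2 := by linarith
  have hsr : r / 2 < r := by linarith
  have hsY : Integrable (fun ω => Real.exp (r / 2 * |Y ω|)) μ := int_exp_abs hY hs hsr hmgf
  rw [show probLahBell μ Ys (n + 1) x
    = ∑ k ∈ range (n + 2), probLah μ Ys (n + 1) k * x ^ k from rfl]
  rw [Finset.sum_range_succ' (fun k => probLah μ Ys (n + 1) k * x ^ k) (n + 1)]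
  rw [probLah_succ_zero, zero_mul, add_zero]
  have h1 : ∀ k ∈ range (n + 1), probLah μ Ys (n + 1) (k + 1) * x ^ (k + 1)
      = ∑ j ∈ range (n + 1), (n.choose j : ℝ) * (∫ ω, asc (Y ω) (j + 1) ∂μ) *
          (probLah μ Ys (n - j) k * x ^ (k + 1)) := by
    intro k _
    rw [probLah_succ_succ hYs hindep hid hs hsY n k, Finset.sum_mul]
    exact Finset.sum_congr rfl fun j _ => by ring
  rw [Finset.sum_congr rfl h1, Finset.sum_comm, Finset.mul_sum]
  refine Finset.sum_congr rfl fun j hj => ?_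
  have hjn : j ≤ n := Nat.lt_succ_iff.mp (Finset.mem_range.mp hj)
  have hfill : ∑ k ∈ range (n + 1), probLah μ Ys (n - j) k * x ^ k
      = probLahBell μ Ys (n - j) x := by
    rw [show probLahBell μ Ys (n - j) x
      = ∑ k ∈ range (n - j + 1), probLah μ Ys (n - j) k * x ^ k from rfl]
    symm
    refine Finset.sum_subset (Finset.range_subset_range.mpr (by omega)) ?_
    intro k _ hk2
    rw [probLah_zero_of_lt hYs hindep hid hs hsY
      (by simpa using Nat.lt_of_succ_le (Nat.succ_le_of_lt (by
        have := Finset.mem_range.not.mp hk2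
        omega))), zero_mul]
  calc ∑ k ∈ range (n + 1), (n.choose j : ℝ) * (∫ ω, asc (Y ω) (j + 1) ∂μ) *
        (probLah μ Ys (n - j) k * x ^ (k + 1))
      = (n.choose j : ℝ) * (∫ ω, asc (Y ω) (j + 1) ∂μ) * x *
        ∑ k ∈ range (n + 1), probLah μ Ys (n - j) k * x ^ k := by
        rw [Finset.mul_sum]
        exact Finset.sum_congr rfl fun k _ => by ring
    _ = x * ((n.choose j : ℝ) * (∫ ω, asc (Y ω) (j + 1) ∂μ) * probLahBell μ Ys (n - j) x) := by
        rw [hfill]; ring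

end Prob2

theorem statement_6 {Ω : Type*} [MeasurableSpace Ω] (μ : Measure Ω) [IsProbabilityMeasure μ]
    (Y : Ω → ℝ) (Ys : ℕ → Ω → ℝ)
    (hY : Measurable Y) (hYs : ∀ j, Measurable (Ys j))
    (hid : ∀ j, IdentDistrib (Ys j) Y μ μ)
    (hindep : iIndepFun Ys μ)
    (r : ℝ) (hr : 0 < r)
    (hmgf : ∀ t : ℝ, |t| < r → Integrable (fun ω => Real.exp (t * Y ω)) μ)
    (n : ℕ) (x : ℝ) :
    probLahBell μ Ys (n + 1) x = x * ∑ k ∈ Finset.range (n + 1),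
      (n.choose k : ℝ) * (∫ ω, asc (Y ω) (k + 1) ∂μ) * probLahBell μ Ys (n - k) x :=
  statement_6' hY hYs hid hindep r hr hmgf n x
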